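/- arXiv:2510.03593 — 4 statements merged into one kernel-verified Lean document; each statement's English description precedes it below -/
import Mathlib

section
/- Let μ, ω ∈ ℝ with ω > 0 and set λ = μ + iω. Let g₂₀, g₁₁, g₀₂ ∈ ℂ and define h₂₀ = g₂₀/λ, h₁₁ = g₁₁/conj(λ), h₀₂ = g₀₂/(2·conj(λ) - λ). Define φ : ℂ → ℂ by φ(w) = w + (h₂₀/2) w² + h₁₁ w w̄ + (h₀₂/2) w̄², and G : ℂ → ℂ by G(z) = λ z + (g₂₀/2) z² + g₁₁ z z̄ + (g₀₂/2) z̄². Then there exists C > 0 such that for all w ∈ ℂ with |w| ≤ 1, |(1 + h₂₀ w + h₁₁ w̄)·(λ w) + (h₁₁ w + h₀₂ w̄)·conj(λ w) - G(φ(w))| ≤ C |w|³. (That is, the near-identity change of coordinates z = φ(w) with these coefficients removes all quadratic terms of the planar vector field G, transforming it into the linear field λw up to cubic-order errors.) -/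
/-- the near-identity transformation `z = φ(w)` with quadratic coefficients
`h₂₀ = g₂₀/λ`, `h₁₁ = g₁₁/λ̄`, `h₀₂ = g₀₂/(2λ̄ - λ)` removes all quadratic terms of the
planar field `G(z) = λz + (g₂₀/2)z² + g₁₁ z z̄ + (g₀₂/2) z̄²`: the chain-rule derivative
of `φ` along `w' = λ w` agrees with `G ∘ φ` up to a cubic-order error. -/
theorem hopf_quadratic_terms_removal
    (μ ω : ℝ) (hω : 0 < ω) (lam : ℂ) (hlam : lam = μ + ω * Complex.I)
    (g20 g11 g02 h20 h11 h02 : ℂ)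
    (hh20 : h20 = g20 / lam) (hh11 : h11 = g11 / star lam)
    (hh02 : h02 = g02 / (2 * star lam - lam))
    (φ G : ℂ → ℂ)
    (hφ : ∀ w : ℂ, φ w = w + h20 / 2 * w ^ 2 + h11 * w * star w + h02 / 2 * (star w) ^ 2)
    (hG : ∀ z : ℂ, G z = lam * z + g20 / 2 * z ^ 2 + g11 * z * star z + g02 / 2 * (star z) ^ 2) :
    ∃ C > 0, ∀ w : ℂ, ‖w‖ ≤ 1 →
      ‖(1 + h20 * w + h11 * star w) * (lam * w)
          + (h11 * w + h02 * star w) * star (lam * w) - G (φ w)‖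
        ≤ C * (‖w‖) ^ 3 := by
  -- nonvanishing denominators
  have hL0 : lam ≠ 0 := by
    have him : lam.im = ω := by rw [hlam]; simp
    intro h; rw [h] at him; simp at him; exact hω.ne' him.symm
  have hM0 : star lam ≠ 0 := star_ne_zero.mpr hL0
  have hD0 : 2 * star lam - lam ≠ 0 := by
    have him : (2 * star lam - lam).im = -3 * ω := by
      rw [hlam]; simp [Complex.sub_im, Complex.mul_im, Complex.conj_im]; ring
    intro h; rw [h] at him; simp at him
    have := hω.ne'; exact this (by linarith)
  have c20 : g20 = h20 * lam := by rw [hh20, div_mul_cancel₀ _ hL0]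
  have c11 : g11 = h11 * star lam := by rw [hh11, div_mul_cancel₀ _ hM0]
  have c02 : g02 = h02 * (2 * star lam - lam) := by rw [hh02, div_mul_cancel₀ _ hD0]
  -- abbreviations
  set M := star lam with hM
  set k20 := star h20 with hk20
  set k11 := star h11 with hk11
  set k02 := star h02 with hk02
  -- the nine higher-order coefficients
  set A30 : ℂ := -(M*h11*k02)/2 - lam*h20^2/2 with hA30
  set A21 : ℂ := -(M*h02*k02) - M*h11*k11 - M*h20*h11/2 + lam*h02*k02/2 - lam*h20*h11 with hA21
  set A12 : ℂ := -(2*M*h02*k11) - M*h11*k20/2 - M*h11^2 + lam*h02*k11 - lam*h20*h02/2 with hA12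
  set A03 : ℂ := -(M*h02*k20) - M*h11*h02/2 + lam*h02*k20/2 with hA03
  set A40 : ℂ := -(M*h02*k02^2)/4 - M*h20*h11*k02/4 + lam*h02*k02^2/8 - lam*h20^3/8 with hA40
  set A31 : ℂ := -(M*h02*k11*k02) - M*h11^2*k02/2 - M*h20*h11*k11/2 + lam*h02*k11*k02/2
      - lam*h20^2*h11/2 with hA31
  set A22 : ℂ := -(M*h02*k11^2) - M*h02*k20*k02/2 - M*h11*h02*k02/4 - M*h11^2*k11
      - M*h20*h11*k20/4 + lam*h02*k11^2/2 + lam*h02*k20*k02/4 - lam*h20*h11^2/2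
      - lam*h20^2*h02/4 with hA22
  set A13 : ℂ := -(M*h02*k20*k11) - M*h11*h02*k11/2 - M*h11^2*k20/2 + lam*h02*k20*k11/2
      - lam*h20*h11*h02/2 with hA13
  set A04 : ℂ := -(M*h02*k20^2)/4 - M*h11*h02*k20/4 + lam*h02*k20^2/8 - lam*h20*h02^2/8 with hA04
  -- key algebraic identity
  have key : ∀ w : ℂ,
      (1 + h20 * w + h11 * star w) * (lam * w) + (h11 * w + h02 * star w) * star (lam * w)
        - G (φ w)
      = w^3 * A30 + w^2 * star w * A21 + w * (star w)^2 * A12 + (star w)^3 * A03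
        + w^4 * A40 + w^3 * star w * A31 + w^2 * (star w)^2 * A22 + w * (star w)^3 * A13
        + (star w)^4 * A04 := by
    intro w
    have hstarφ : star (φ w)
        = star w + k20 / 2 * (star w) ^ 2 + k11 * star w * w + k02 / 2 * w ^ 2 := by
      rw [hφ]
      simp only [star_add, star_mul', star_pow, star_div₀, star_ofNat, star_star,
        hk20, hk11, hk02]
    rw [hG, hstarφ, hφ, c20, c11, c02, hA30, hA21, hA12, hA03, hA40, hA31, hA22, hA13, hA04,
      star_mul', hM]
    ring
  refine ⟨‖A30‖ + ‖A21‖ + ‖A12‖ + ‖A03‖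
    + ‖A40‖ + ‖A31‖ + ‖A22‖ + ‖A13‖
    + ‖A04‖ + 1, by positivity, ?_⟩
  intro w hw
  rw [key w]
  have hsw : ‖star w‖ = ‖w‖ := by
    rw [Complex.star_def, Complex.norm_conj]
  have tb : ∀ (i j : ℕ) (A : ℂ), 3 ≤ i + j →
      ‖w ^ i * (star w) ^ j * A‖ ≤ ‖A‖ * ‖w‖ ^ 3 := by
    intro i j A hij
    rw [norm_mul, norm_mul, norm_pow, norm_pow, hsw, ← pow_add, mul_comm]
    exact mul_le_mul_of_nonneg_left
      (pow_le_pow_of_le_one (norm_nonneg w) hw hij) (norm_nonneg A)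
  have step : ∀ (x y : ℂ) (a b : ℝ), ‖x‖ ≤ a → ‖y‖ ≤ b →
      ‖x + y‖ ≤ a + b := fun x y a b hx hy =>
    (norm_add_le x y).trans (add_le_add hx hy)
  have b30 : ‖w^3 * A30‖ ≤ ‖A30‖ * ‖w‖ ^ 3 := by
    simpa using tb 3 0 A30 (by norm_num)
  have b21 : ‖w^2 * star w * A21‖ ≤ ‖A21‖ * ‖w‖ ^ 3 := by
    simpa using tb 2 1 A21 (by norm_num)
  have b12 : ‖w * (star w)^2 * A12‖ ≤ ‖A12‖ * ‖w‖ ^ 3 := by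
    simpa using tb 1 2 A12 (by norm_num)
  have b03 : ‖(star w)^3 * A03‖ ≤ ‖A03‖ * ‖w‖ ^ 3 := by
    simpa using tb 0 3 A03 (by norm_num)
  have b40 : ‖w^4 * A40‖ ≤ ‖A40‖ * ‖w‖ ^ 3 := by
    simpa using tb 4 0 A40 (by norm_num)
  have b31 : ‖w^3 * star w * A31‖ ≤ ‖A31‖ * ‖w‖ ^ 3 := by
    simpa using tb 3 1 A31 (by norm_num)
  have b22 : ‖w^2 * (star w)^2 * A22‖ ≤ ‖A22‖ * ‖w‖ ^ 3 := by
    simpa using tb 2 2 A22 (by norm_num)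
  have b13 : ‖w * (star w)^3 * A13‖ ≤ ‖A13‖ * ‖w‖ ^ 3 := by
    simpa using tb 1 3 A13 (by norm_num)
  have b04 : ‖(star w)^4 * A04‖ ≤ ‖A04‖ * ‖w‖ ^ 3 := by
    simpa using tb 0 4 A04 (by norm_num)
  have main := step _ _ _ _ (step _ _ _ _ (step _ _ _ _ (step _ _ _ _ (step _ _ _ _
    (step _ _ _ _ (step _ _ _ _ (step _ _ _ _ b30 b21) b12) b03) b40) b31) b22) b13) b04
  refine main.trans ?_
  have h3 : (0:ℝ) ≤ ‖w‖ ^ 3 := by positivity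
  nlinarith [h3]
end

section
/- Let μ, ω ∈ ℝ with ω > 0 and set λ = μ + iω. Let g₂₀, g₁₁, g₀₂, g₃₀, g₂₁, g₁₂, g₀₃ ∈ ℂ. Define h₂₀ = g₂₀/λ, h₁₁ = g₁₁/conj(λ), h₀₂ = g₀₂/(2·conj(λ) - λ), and define the first Lyapunov quantity c₁ = ((2λ + conj(λ))/(2 λ conj(λ))) g₂₀ g₁₁ + |g₁₁|²/λ + |g₀₂|²/(2(2λ - conj(λ))) + g₂₁/2. Define G : ℂ → ℂ by G(z) = λ z + (g₂₀/2) z² + g₁₁ z z̄ + (g₀₂/2) z̄² + (g₃₀/6) z³ + (g₂₁/2) z² z̄ + (g₁₂/2) z z̄² + (g₀₃/6) z̄³, and N : ℂ → ℂ by N(w) = λ w + c₁ w² w̄. Then there exist h₃₀, h₁₂, h₀₃ ∈ ℂ such that, with φ(w) = w + (h₂₀/2) w² + h₁₁ w w̄ + (h₀₂/2) w̄² + (h₃₀/6) w³ + (h₁₂/2) w w̄² + (h₀₃/6) w̄³, there exists C > 0 such that for all w ∈ ℂ with |w| ≤ 1, |(1 + h₂₀ w + h₁₁ w̄ + (h₃₀/2)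 w² + (h₁₂/2) w̄²)·N(w) + (h₁₁ w + h₀₂ w̄ + h₁₂ w w̄ + (h₀₃/2) w̄²)·conj(N(w)) - G(φ(w))| ≤ C |w|⁴. (That is, with the cubic coefficient of w²w̄ in the transformation set to zero, the near-identity change of coordinates z = φ(w) conjugates the cubic planar field G to the Poincaré normal form w' = λw + c₁ w² w̄ up to fourth-order errors, where c₁ is given by Bautin's formula.) -/
private def pEval : List (ℂ × ℕ × ℕ) → ℂ → ℂ
  | [], _ => 0
  | (c, a, b) :: L, w => c * w ^ a * (star w) ^ b + pEval L w

private noncomputable def pAbs (L : List (ℂ × ℕ × ℕ)) : ℝ :=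
  (L.map fun t => ‖t.1‖).sum

private lemma pAbs_nil : pAbs [] = 0 := rfl

private lemma pAbs_cons (c : ℂ) (a b : ℕ) (L : List (ℂ × ℕ × ℕ)) :
    pAbs ((c, a, b) :: L) = ‖c‖ + pAbs L := by simp [pAbs]

private lemma pAbs_nonneg (L : List (ℂ × ℕ × ℕ)) : 0 ≤ pAbs L := by
  apply List.sum_nonneg; intro x hx
  obtain ⟨t, _, rfl⟩ := List.mem_map.mp hx
  exact norm_nonneg _

private lemma abs_star' (z : ℂ) : ‖star z‖ = ‖z‖ :=
  Complex.norm_conj z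

private lemma pEval_abs_le : ∀ (L : List (ℂ × ℕ × ℕ)) (w : ℂ), ‖w‖ ≤ 1 →
    ‖pEval L w‖ ≤ pAbs L
  | [], w, hw => by simp [pEval, pAbs_nil]
  | (c, a, b) :: L, w, hw => by
      simp only [pEval]
      rw [pAbs_cons]
      refine (norm_add_le _ _).trans (add_le_add ?_ (pEval_abs_le L w hw))
      rw [norm_mul, norm_mul, norm_pow, norm_pow, abs_star']
      have h0 : (0:ℝ) ≤ ‖w‖ := norm_nonneg w
      have ha : ‖w‖ ^ a ≤ 1 := pow_le_one₀ h0 hw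
      have hb : ‖w‖ ^ b ≤ 1 := pow_le_one₀ h0 hw
      have hc : (0:ℝ) ≤ ‖c‖ := norm_nonneg c
      calc ‖c‖ * ‖w‖ ^ a * ‖w‖ ^ b
          = ‖c‖ * (‖w‖ ^ a * ‖w‖ ^ b) := by ring
        _ ≤ ‖c‖ * 1 :=
            mul_le_mul_of_nonneg_left (mul_le_one₀ ha (pow_nonneg h0 b) hb) hc
        _ = ‖c‖ := mul_one _

private lemma term_bound (L : List (ℂ × ℕ × ℕ)) (w : ℂ) (hw : ‖w‖ ≤ 1)
    (a b : ℕ) (hab : a + b = 4) :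
    ‖w ^ a * (star w) ^ b * pEval L w‖ ≤ pAbs L * ‖w‖ ^ 4 := by
  rw [norm_mul, norm_mul, norm_pow, norm_pow, abs_star', ← pow_add, hab]
  calc ‖w‖ ^ 4 * ‖pEval L w‖ ≤ ‖w‖ ^ 4 * pAbs L := by
        exact mul_le_mul_of_nonneg_left (pEval_abs_le L w hw)
          (pow_nonneg (norm_nonneg w) 4)
    _ = pAbs L * ‖w‖ ^ 4 := mul_comm _ _

set_option maxHeartbeats 4000000 in
/-- with the quadratic coefficients `h₂₀ = g₂₀/λ`, `h₁₁ = g₁₁/λ̄`,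
`h₀₂ = g₀₂/(2λ̄-λ)`, the cubic coefficient of `w²w̄` set to zero, and Bautin's first
Lyapunov quantity `c₁`, there exist cubic coefficients `h₃₀, h₁₂, h₀₃` such that the
near-identity transformation `z = φ(w)` conjugates the cubic planar field `G` to the
Poincaré normal form `N(w) = λw + c₁ w²w̄` up to fourth-order errors. -/
theorem hopf_poincare_normal_form_cubic
    (μ ω : ℝ) (hω : 0 < ω) (lam : ℂ) (hlam : lam = μ + ω * Complex.I)
    (g20 g11 g02 g30 g21 g12 g03 h20 h11 h02 c₁ : ℂ)
    (hh20 : h20 = g20 / lam) (hh11 : h11 = g11 / star lam)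
    (hh02 : h02 = g02 / (2 * star lam - lam))
    (hc₁ : c₁ = (2 * lam + star lam) / (2 * lam * star lam) * g20 * g11
      + g11 * star g11 / lam + g02 * star g02 / (2 * (2 * lam - star lam)) + g21 / 2)
    (G N : ℂ → ℂ)
    (hG : ∀ z : ℂ, G z = lam * z + g20 / 2 * z ^ 2 + g11 * z * star z + g02 / 2 * (star z) ^ 2
      + g30 / 6 * z ^ 3 + g21 / 2 * z ^ 2 * star z + g12 / 2 * z * (star z) ^ 2
      + g03 / 6 * (star z) ^ 3)
    (hN : ∀ w : ℂ, N w = lam * w + c₁ * w ^ 2 * star w) :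
    ∃ h30 h12 h03 : ℂ, ∃ φ : ℂ → ℂ,
      (∀ w : ℂ, φ w = w + h20 / 2 * w ^ 2 + h11 * w * star w + h02 / 2 * (star w) ^ 2
        + h30 / 6 * w ^ 3 + h12 / 2 * w * (star w) ^ 2 + h03 / 6 * (star w) ^ 3) ∧
      ∃ C > 0, ∀ w : ℂ, ‖w‖ ≤ 1 →
        ‖(1 + h20 * w + h11 * star w + h30 / 2 * w ^ 2 + h12 / 2 * (star w) ^ 2) * N w
            + (h11 * w + h02 * star w + h12 * w * star w + h03 / 2 * (star w) ^ 2) * star (N w)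
            - G (φ w)‖
          ≤ C * ‖w‖ ^ 4 := by
  have hω0 : ω ≠ 0 := ne_of_gt hω
  have him : lam.im = ω := by rw [hlam]; simp
  have him2 : (star lam).im = -ω := by
    rw [Complex.star_def, Complex.conj_im, him]
  have hlam0 : lam ≠ 0 := by
    intro h; rw [h] at him; apply hω0
    simpa using him.symm
  have hlb0 : star lam ≠ 0 := star_ne_zero.mpr hlam0
  have hd1 : 2 * star lam - lam ≠ 0 := by
    intro h
    have h' := congrArg Complex.im h
    simp [Complex.sub_im, Complex.mul_im, him, him2] at h'
    linarith
  have hd2 : 2 * lam - star lam ≠ 0 := by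
    intro h
    have h' := congrArg Complex.im h
    simp [Complex.sub_im, Complex.mul_im, him, him2] at h'
    linarith
  have hd3 : 3 * star lam - lam ≠ 0 := by
    intro h
    have h' := congrArg Complex.im h
    simp [Complex.sub_im, Complex.mul_im, him, him2] at h'
    linarith
  have e20 : g20 = lam * h20 := by rw [hh20, mul_div_cancel₀ g20 hlam0]
  have e11 : g11 = star lam * h11 := by rw [hh11, mul_div_cancel₀ g11 hlb0]
  have e02 : g02 = (2 * star lam - lam) * h02 := by rw [hh02, mul_div_cancel₀ g02 hd1]
  have sg11 : star g11 = lam * star h11 := by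
    rw [e11, star_mul, star_star]; ring
  have sg02 : star g02 = (2 * lam - star lam) * star h02 := by
    rw [e02]; simp only [star_sub, star_mul, star_ofNat, star_star]; ring
  have hD : 2 * lam * star lam ≠ 0 := mul_ne_zero (mul_ne_zero two_ne_zero hlam0) hlb0
  have hD2 : 2 * (2 * lam - star lam) ≠ 0 := mul_ne_zero two_ne_zero hd2
  have A1 : (2 * lam + star lam) / (2 * lam * star lam) * g20 * g11
      = (2 * lam + star lam) * h20 * h11 / 2 := by
    rw [e20, e11, div_mul_eq_mul_div, div_mul_eq_mul_div, div_eq_div_iff hD two_ne_zero]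
    ring
  have A2 : g11 * star g11 / lam = star lam * h11 * star h11 := by
    rw [sg11, e11, div_eq_iff hlam0]; ring
  have A3 : g02 * star g02 / (2 * (2 * lam - star lam))
      = (2 * star lam - lam) * h02 * star h02 / 2 := by
    rw [sg02, e02, div_eq_div_iff hD2 two_ne_zero]; ring
  rw [A1, A2, A3] at hc₁
  have e21 : g21 = 2 * c₁ - (2 * lam + star lam) * h20 * h11
      - 2 * star lam * h11 * star h11 - (2 * star lam - lam) * h02 * star h02 := by
    linear_combination -2 * hc₁
  obtain ⟨h30, e30⟩ : ∃ x : ℂ, g30 = 2 * lam * x + ((-3 : ℂ) * (star lam) * h11 * (star h02) + (-3 : ℂ) * lam * h20 ^ 2) :=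
    ⟨(g30 - ((-3 : ℂ) * (star lam) * h11 * (star h02) + (-3 : ℂ) * lam * h20 ^ 2)) / (2 * lam),
     by rw [mul_div_cancel₀ _ (mul_ne_zero two_ne_zero hlam0)]; ring⟩
  obtain ⟨h12, e12⟩ : ∃ x : ℂ, g12 = 2 * star lam * x + ((-4 : ℂ) * (star lam) * h02 * (star h11) + (-1 : ℂ) * (star lam) * h11 * (star h20) + (-2 : ℂ) * (star lam) * h11 ^ 2 + (2 : ℂ) * lam * h02 * (star h11) + (-1 : ℂ) * lam * h20 * h02) :=
    ⟨(g12 - ((-4 : ℂ) * (star lam) * h02 * (star h11) + (-1 : ℂ) * (star lam) * h11 * (star h20) + (-2 : ℂ) * (star lam) * h11 ^ 2 + (2 : ℂ) * lam * h02 * (star h11) + (-1 : ℂ) * lam * h20 * h02)) / (2 * star lam),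
     by rw [mul_div_cancel₀ _ (mul_ne_zero two_ne_zero hlb0)]; ring⟩
  obtain ⟨h03, e03⟩ : ∃ x : ℂ, g03 = (3 * star lam - lam) * x + ((-6 : ℂ) * (star lam) * h02 * (star h20) + (-3 : ℂ) * (star lam) * h11 * h02 + (3 : ℂ) * lam * h02 * (star h20)) :=
    ⟨(g03 - ((-6 : ℂ) * (star lam) * h02 * (star h20) + (-3 : ℂ) * (star lam) * h11 * h02 + (3 : ℂ) * lam * h02 * (star h20))) / (3 * star lam - lam),
     by rw [mul_div_cancel₀ _ hd3]; ring⟩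
  obtain ⟨L1, hL1⟩ : ∃ L : List (ℂ × ℕ × ℕ), L = [((((-1 : ℂ)/6) * (star h03) * g11 + ((-1 : ℂ)/6) * h30 * g20 + ((-1 : ℂ)/4) * (star h02) * g21 + ((-1 : ℂ)/8) * (star h02) ^ 2 * g02 + ((-1 : ℂ)/4) * h20 * g30 + ((-1 : ℂ)/4) * h20 * (star h02) * g11 + ((-1 : ℂ)/8) * h20 ^ 2 * g20), 0, 0),
      ((((-1 : ℂ)/6) * (star h03) * g12 + ((-1 : ℂ)/4) * (star h12) * g21 + ((-1 : ℂ)/6) * h30 * g21 + ((1 : ℂ)/2) * h30 * c₁ + ((-1 : ℂ)/4) * (star h02) * (star h12) * g02 + ((-1 : ℂ)/8) * (star h02) ^ 2 * g03 + ((-1 : ℂ)/6) * (star h11) * (star h03) * g02 + ((-1 : ℂ)/6) * (star h11) * h30 * g11 + ((-1 : ℂ)/2) * (star h11) * (star h02) * g12 + ((-1 : ℂ)/6) * h11 * (star h03) * g11 + ((-1 : ℂ)/6) * h11 * h30 * g20 + ((-1 : ℂ)/2) * h11 * (star h02) * g21 + ((-1 : ℂ)/4) * h20 * (star h12) * g11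 + ((-1 : ℂ)/4) * h20 * (star h02) * g12 + ((-1 : ℂ)/2) * h20 * (star h11) * g21 + ((-1 : ℂ)/2) * h20 * h11 * g30 + ((-1 : ℂ)/8) * h20 ^ 2 * g21), 0, 1),
      ((((-1 : ℂ)/8) * (star h12) ^ 2 * g02 + ((-1 : ℂ)/12) * h12 * (star h03) * g11 + ((-1 : ℂ)/12) * h30 * h12 * g20 + ((-1 : ℂ)/4) * (star h02) * (star h12) * g03 + ((-1 : ℂ)/4) * (star h02) * h12 * g21 + ((-1 : ℂ)/6) * (star h11) * (star h03) * g03 + ((-1 : ℂ)/2) * (star h11) * (star h12) * g12 + ((-1 : ℂ)/6) * (star h11) * h30 * g12 + ((-1 : ℂ)/4) * (star h11) ^ 2 * (star h02) * g03 + ((-1 : ℂ)/12) * (star h20) * (star h03) * g12 + ((-1 : ℂ)/12) * (star h20) * h30 * g21 + ((-1 : ℂ)/16) * (star h20) * (star h02) ^ 2 * g03 + ((-1 : ℂ)/12) * h02 * (star h03) * g21 + ((-1 : ℂ)/12) * h02 * h30 * g30 + ((-1 : ℂ)/16) * h02 * (star h02) ^ 2 * g12 + ((-1 : ℂ)/6)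 * h11 * (star h03) * g12 + ((-1 : ℂ)/2) * h11 * (star h12) * g21 + ((-1 : ℂ)/6) * h11 * h30 * g21 + ((-1 : ℂ)/2) * h11 * (star h11) * (star h02) * g12 + ((-1 : ℂ)/4) * h11 ^ 2 * (star h02) * g21 + ((-1 : ℂ)/4) * h20 * (star h12) * g12 + ((-1 : ℂ)/4) * h20 * h12 * g30 + ((-1 : ℂ)/4) * h20 * (star h11) ^ 2 * g12 + ((-1 : ℂ)/8) * h20 * (star h20) * (star h02) * g12 + ((-1 : ℂ)/8) * h20 * h02 * (star h02) * g21 + ((-1 : ℂ)/2) * h20 * h11 * (star h11) * g21 + ((-1 : ℂ)/4) * h20 * h11 ^ 2 * g30 + ((-1 : ℂ)/16) * h20 ^ 2 * (star h20) * g21 + ((-1 : ℂ)/16) * h20 ^ 2 * h02 * g30), 0, 2),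
      ((((-1 : ℂ)/8) * (star h12) ^ 2 * g03 + ((-1 : ℂ)/36) * (star h30) * (star h03) * g12 + ((-1 : ℂ)/36) * h03 * (star h03) * g21 + ((-1 : ℂ)/12) * h12 * (star h03) * g12 + ((-1 : ℂ)/4) * h12 * (star h12) * g21 + ((-1 : ℂ)/36) * h30 * (star h30) * g21 + ((-1 : ℂ)/36) * h30 * h03 * g30 + ((-1 : ℂ)/12) * h30 * h12 * g21 + ((-1 : ℂ)/48) * (star h02) ^ 2 * (star h30) * g03 + ((-1 : ℂ)/48) * (star h02) ^ 2 * h03 * g12 + ((-1 : ℂ)/4) * (star h11) * (star h02) * h12 * g12 + ((-1 : ℂ)/4) * (star h11) ^ 2 * (star h12) * g03 + ((-1 : ℂ)/8) * (star h20) * (star h02) * (star h12) * g03 + ((-1 : ℂ)/12) * (star h20) * (star h11) * (star h03) * g03 + ((-1 : ℂ)/12) * (star h20) * (star h11) * h30 * g12 + ((-1 : ℂ)/8) * h02 * (star h02) * (star h12) * g12 + ((-1 : ℂ)/12) * h02 * (star h11) * (star h03) * g12 + ((-1 : ℂ)/12) * h02 * (star h11) * h30 * g21 + ((-1 : ℂ)/4)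 * h11 * (star h02) * h12 * g21 + ((-1 : ℂ)/2) * h11 * (star h11) * (star h12) * g12 + ((-1 : ℂ)/12) * h11 * (star h20) * (star h03) * g12 + ((-1 : ℂ)/12) * h11 * (star h20) * h30 * g21 + ((-1 : ℂ)/12) * h11 * h02 * (star h03) * g21 + ((-1 : ℂ)/12) * h11 * h02 * h30 * g30 + ((-1 : ℂ)/4) * h11 ^ 2 * (star h12) * g21 + ((-1 : ℂ)/24) * h20 * (star h02) * (star h30) * g12 + ((-1 : ℂ)/24) * h20 * (star h02) * h03 * g21 + ((-1 : ℂ)/4) * h20 * (star h11) * h12 * g21 + ((-1 : ℂ)/8) * h20 * (star h20) * (star h12) * g12 + ((-1 : ℂ)/8) * h20 * h02 * (star h12) * g21 + ((-1 : ℂ)/4) * h20 * h11 * h12 * g30 + ((-1 : ℂ)/48) * h20 ^ 2 * (star h30) * g21 + ((-1 : ℂ)/48) * h20 ^ 2 * h03 * g30), 0, 3),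
      ((((-1 : ℂ)/24) * (star h02) * (star h30) * (star h12) * g03 + ((-1 : ℂ)/24) * (star h02) * h03 * (star h12) * g12 + ((-1 : ℂ)/16) * (star h02) * h12 ^ 2 * g21 + ((-1 : ℂ)/36) * (star h11) * (star h30) * (star h03) * g03 + ((-1 : ℂ)/36) * (star h11) * h03 * (star h03) * g12 + ((-1 : ℂ)/4) * (star h11) * h12 * (star h12) * g12 + ((-1 : ℂ)/36) * (star h11) * h30 * (star h30) * g12 + ((-1 : ℂ)/36) * (star h11) * h30 * h03 * g21 + ((-1 : ℂ)/16) * (star h20) * (star h12) ^ 2 * g03 + ((-1 : ℂ)/24) * (star h20) * h12 * (star h03) * g12 + ((-1 : ℂ)/24) * (star h20) * h30 * h12 * g21 + ((-1 : ℂ)/16) * h02 * (star h12) ^ 2 * g12 + ((-1 : ℂ)/24) * h02 * h12 * (star h03) * g21 + ((-1 : ℂ)/24) * h02 * h30 * h12 * g30 + ((-1 : ℂ)/36) * h11 * (star h30) * (star h03) * g12 + ((-1 : ℂ)/36) * h11 * h03 * (star h03) * g21 + ((-1 : ℂ)/4) * h11 * h12 * (star h12) * g21 + ((-1 : ℂ)/36)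 * h11 * h30 * (star h30) * g21 + ((-1 : ℂ)/36) * h11 * h30 * h03 * g30 + ((-1 : ℂ)/24) * h20 * (star h30) * (star h12) * g12 + ((-1 : ℂ)/24) * h20 * h03 * (star h12) * g21 + ((-1 : ℂ)/16) * h20 * h12 ^ 2 * g30), 0, 4),
      ((((-1 : ℂ)/48) * (star h30) * (star h12) ^ 2 * g03 + ((-1 : ℂ)/48) * h03 * (star h12) ^ 2 * g12 + ((-1 : ℂ)/72) * h12 * (star h30) * (star h03) * g12 + ((-1 : ℂ)/72) * h12 * h03 * (star h03) * g21 + ((-1 : ℂ)/16) * h12 ^ 2 * (star h12) * g21 + ((-1 : ℂ)/72) * h30 * h12 * (star h30) * g21 + ((-1 : ℂ)/72) * h30 * h12 * h03 * g30), 0, 5),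
      ((((-1 : ℂ)/12) * (star h03) * g21 + ((-1 : ℂ)/12) * h30 * g30 + ((-1 : ℂ)/12) * (star h02) * (star h03) * g02 + ((-1 : ℂ)/12) * (star h02) * h30 * g11 + ((-1 : ℂ)/8) * (star h02) ^ 2 * g12 + ((-1 : ℂ)/12) * h20 * (star h03) * g11 + ((-1 : ℂ)/12) * h20 * h30 * g20 + ((-1 : ℂ)/4) * h20 * (star h02) * g21 + ((-1 : ℂ)/8) * h20 ^ 2 * g30), 1, 0),
      ((((-1 : ℂ)/12) * (star h12) * (star h03) * g02 + ((-1 : ℂ)/12) * h30 * (star h12) * g11 + ((-1 : ℂ)/12) * (star h02) * (star h03) * g03 + ((-1 : ℂ)/4) * (star h02) * (star h12) * g12 + ((-1 : ℂ)/12) * (star h02) * h30 * g12 + ((-1 : ℂ)/6) * (star h11) * (star h03) * g12 + ((-1 : ℂ)/6) * (star h11) * h30 * g21 + ((-1 : ℂ)/8) * (star h11) * (star h02) ^ 2 * g03 + ((-1 : ℂ)/6) * h11 * (star h03) * g21 + ((-1 : ℂ)/6) * h11 * h30 * g30 + ((-1 : ℂ)/8) * h11 * (star h02) ^ 2 * g12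 + ((-1 : ℂ)/12) * h20 * (star h03) * g12 + ((-1 : ℂ)/4) * h20 * (star h12) * g21 + ((-1 : ℂ)/12) * h20 * h30 * g21 + ((-1 : ℂ)/4) * h20 * (star h11) * (star h02) * g12 + ((-1 : ℂ)/4) * h20 * h11 * (star h02) * g21 + ((-1 : ℂ)/8) * h20 ^ 2 * (star h11) * g21 + ((-1 : ℂ)/8) * h20 ^ 2 * h11 * g30), 1, 1),
      ((((-1 : ℂ)/12) * (star h12) * (star h03) * g03 + ((-1 : ℂ)/8) * (star h12) ^ 2 * g12 + ((-1 : ℂ)/12) * h12 * (star h03) * g21 + ((-1 : ℂ)/12) * h30 * (star h12) * g12 + ((-1 : ℂ)/12) * h30 * h12 * g30 + ((-1 : ℂ)/16) * (star h02) ^ 2 * h12 * g12 + ((-1 : ℂ)/4) * (star h11) * (star h02) * (star h12) * g03 + ((-1 : ℂ)/12) * (star h11) ^ 2 * (star h03) * g03 + ((-1 : ℂ)/12) * (star h11) ^ 2 * h30 * g12 + ((-1 : ℂ)/24) * (star h20) * (star h02) * (star h03) * g03 + ((-1 : ℂ)/24) * (star h20) * (star h02) * h30 * g12 + ((-1 :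 ℂ)/24) * h02 * (star h02) * (star h03) * g12 + ((-1 : ℂ)/24) * h02 * (star h02) * h30 * g21 + ((-1 : ℂ)/4) * h11 * (star h02) * (star h12) * g12 + ((-1 : ℂ)/6) * h11 * (star h11) * (star h03) * g12 + ((-1 : ℂ)/6) * h11 * (star h11) * h30 * g21 + ((-1 : ℂ)/12) * h11 ^ 2 * (star h03) * g21 + ((-1 : ℂ)/12) * h11 ^ 2 * h30 * g30 + ((-1 : ℂ)/8) * h20 * (star h02) * h12 * g21 + ((-1 : ℂ)/4) * h20 * (star h11) * (star h12) * g12 + ((-1 : ℂ)/24) * h20 * (star h20) * (star h03) * g12 + ((-1 : ℂ)/24) * h20 * (star h20) * h30 * g21 + ((-1 : ℂ)/24) * h20 * h02 * (star h03) * g21 + ((-1 : ℂ)/24) * h20 * h02 * h30 * g30 + ((-1 : ℂ)/4) * h20 * h11 * (star h12) * g21 + ((-1 : ℂ)/16) * h20 ^ 2 * h12 * g30), 1, 2),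
      ((((-1 : ℂ)/72) * (star h02) * (star h30) * (star h03) * g03 + ((-1 : ℂ)/72) * (star h02) * h03 * (star h03) * g12 + ((-1 : ℂ)/8) * (star h02) * h12 * (star h12) * g12 + ((-1 : ℂ)/72) * (star h02) * h30 * (star h30) * g12 + ((-1 : ℂ)/72) * (star h02) * h30 * h03 * g21 + ((-1 : ℂ)/8) * (star h11) * (star h12) ^ 2 * g03 + ((-1 : ℂ)/12) * (star h11) * h12 * (star h03) * g12 + ((-1 : ℂ)/12) * (star h11) * h30 * h12 * g21 + ((-1 : ℂ)/24) * (star h20) * (star h12) * (star h03) * g03 + ((-1 : ℂ)/24) * (star h20) * h30 * (star h12) * g12 + ((-1 : ℂ)/24) * h02 * (star h12) * (star h03) * g12 + ((-1 : ℂ)/24) * h02 * h30 * (star h12) * g21 + ((-1 : ℂ)/8) * h11 * (star h12) ^ 2 * g12 + ((-1 : ℂ)/12) * h11 * h12 * (star h03) * g21 + ((-1 : ℂ)/12) * h11 * h30 * h12 * g30 + ((-1 : ℂ)/72) * h20 * (star h30) * (star h03) * g12 + ((-1 : ℂ)/72) * h20 * h03 * (star h03) * g21 + ((-1 : ℂ)/8)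 * h20 * h12 * (star h12) * g21 + ((-1 : ℂ)/72) * h20 * h30 * (star h30) * g21 + ((-1 : ℂ)/72) * h20 * h30 * h03 * g30), 1, 3),
      ((((-1 : ℂ)/72) * (star h30) * (star h12) * (star h03) * g03 + ((-1 : ℂ)/72) * h03 * (star h12) * (star h03) * g12 + ((-1 : ℂ)/16) * h12 * (star h12) ^ 2 * g12 + ((-1 : ℂ)/48) * h12 ^ 2 * (star h03) * g21 + ((-1 : ℂ)/72) * h30 * (star h30) * (star h12) * g12 + ((-1 : ℂ)/72) * h30 * h03 * (star h12) * g21 + ((-1 : ℂ)/48) * h30 * h12 ^ 2 * g30), 1, 4),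
      ((((-1 : ℂ)/72) * (star h03) ^ 2 * g02 + ((-1 : ℂ)/36) * h30 * (star h03) * g11 + ((-1 : ℂ)/72) * h30 ^ 2 * g20 + ((-1 : ℂ)/12) * (star h02) * (star h03) * g12 + ((-1 : ℂ)/12) * (star h02) * h30 * g21 + ((-1 : ℂ)/48) * (star h02) ^ 3 * g03 + ((-1 : ℂ)/12) * h20 * (star h03) * g21 + ((-1 : ℂ)/12) * h20 * h30 * g30 + ((-1 : ℂ)/16) * h20 * (star h02) ^ 2 * g12 + ((-1 : ℂ)/16) * h20 ^ 2 * (star h02) * g21 + ((-1 : ℂ)/48) * h20 ^ 3 * g30), 2, 0),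
      ((((-1 : ℂ)/72) * (star h03) ^ 2 * g03 + ((-1 : ℂ)/12) * (star h12) * (star h03) * g12 + ((-1 : ℂ)/36) * h30 * (star h03) * g12 + ((-1 : ℂ)/12) * h30 * (star h12) * g21 + ((-1 : ℂ)/72) * h30 ^ 2 * g21 + ((-1 : ℂ)/16) * (star h02) ^ 2 * (star h12) * g03 + ((-1 : ℂ)/12) * (star h11) * (star h02) * (star h03) * g03 + ((-1 : ℂ)/12) * (star h11) * (star h02) * h30 * g12 + ((-1 : ℂ)/12) * h11 * (star h02) * (star h03) * g12 + ((-1 : ℂ)/12) * h11 * (star h02) * h30 * g21 + ((-1 : ℂ)/8) * h20 * (star h02) * (star h12) * g12 + ((-1 : ℂ)/12) * h20 * (star h11) * (star h03) * g12 + ((-1 : ℂ)/12) * h20 * (star h11) * h30 * g21 + ((-1 : ℂ)/12) * h20 * h11 * (star h03) * g21 + ((-1 : ℂ)/12) * h20 * h11 * h30 * g30 + ((-1 : ℂ)/16) * h20 ^ 2 * (star h12) * g21), 2, 1),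
      ((((-1 : ℂ)/16) * (star h02) * (star h12) ^ 2 * g03 + ((-1 : ℂ)/24) * (star h02) * h12 * (star h03) * g12 + ((-1 : ℂ)/24) * (star h02) * h30 * h12 * g21 + ((-1 : ℂ)/12) * (star h11) * (star h12) * (star h03) * g03 + ((-1 : ℂ)/12) * (star h11) * h30 * (star h12) * g12 + ((-1 : ℂ)/144) * (star h20) * (star h03) ^ 2 * g03 + ((-1 : ℂ)/72) * (star h20) * h30 * (star h03) * g12 + ((-1 : ℂ)/144) * (star h20) * h30 ^ 2 * g21 + ((-1 : ℂ)/144) * h02 * (star h03) ^ 2 * g12 + ((-1 : ℂ)/72) * h02 * h30 * (star h03) * g21 + ((-1 : ℂ)/144) * h02 * h30 ^ 2 * g30 + ((-1 : ℂ)/12) * h11 * (star h12) * (star h03) * g12 + ((-1 : ℂ)/12) * h11 * h30 * (star h12) * g21 + ((-1 : ℂ)/16) * h20 * (star h12) ^ 2 * g12 + ((-1 : ℂ)/24) * h20 * h12 * (star h03) * g21 + ((-1 : ℂ)/24) * h20 * h30 * h12 * g30), 2, 2),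
      ((((-1 : ℂ)/48) * (star h12) ^ 3 * g03 + ((-1 : ℂ)/432) * (star h30) * (star h03) ^ 2 * g03 + ((-1 : ℂ)/432) * h03 * (star h03) ^ 2 * g12 + ((-1 : ℂ)/24) * h12 * (star h12) * (star h03) * g12 + ((-1 : ℂ)/216) * h30 * (star h30) * (star h03) * g12 + ((-1 : ℂ)/216) * h30 * h03 * (star h03) * g21 + ((-1 : ℂ)/24) * h30 * h12 * (star h12) * g21 + ((-1 : ℂ)/432) * h30 ^ 2 * (star h30) * g21 + ((-1 : ℂ)/432) * h30 ^ 2 * h03 * g30), 2, 3),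
      ((((-1 : ℂ)/72) * (star h03) ^ 2 * g12 + ((-1 : ℂ)/36) * h30 * (star h03) * g21 + ((-1 : ℂ)/72) * h30 ^ 2 * g30 + ((-1 : ℂ)/48) * (star h02) ^ 2 * (star h03) * g03 + ((-1 : ℂ)/48) * (star h02) ^ 2 * h30 * g12 + ((-1 : ℂ)/24) * h20 * (star h02) * (star h03) * g12 + ((-1 : ℂ)/24) * h20 * (star h02) * h30 * g21 + ((-1 : ℂ)/48) * h20 ^ 2 * (star h03) * g21 + ((-1 : ℂ)/48) * h20 ^ 2 * h30 * g30), 3, 0),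
      ((((-1 : ℂ)/24) * (star h02) * (star h12) * (star h03) * g03 + ((-1 : ℂ)/24) * (star h02) * h30 * (star h12) * g12 + ((-1 : ℂ)/72) * (star h11) * (star h03) ^ 2 * g03 + ((-1 : ℂ)/36) * (star h11) * h30 * (star h03) * g12 + ((-1 : ℂ)/72) * (star h11) * h30 ^ 2 * g21 + ((-1 : ℂ)/72) * h11 * (star h03) ^ 2 * g12 + ((-1 : ℂ)/36) * h11 * h30 * (star h03) * g21 + ((-1 : ℂ)/72) * h11 * h30 ^ 2 * g30 + ((-1 : ℂ)/24) * h20 * (star h12) * (star h03) * g12 + ((-1 : ℂ)/24) * h20 * h30 * (star h12) * g21), 3, 1),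
      ((((-1 : ℂ)/48) * (star h12) ^ 2 * (star h03) * g03 + ((-1 : ℂ)/144) * h12 * (star h03) ^ 2 * g12 + ((-1 : ℂ)/48) * h30 * (star h12) ^ 2 * g12 + ((-1 : ℂ)/72) * h30 * h12 * (star h03) * g21 + ((-1 : ℂ)/144) * h30 ^ 2 * h12 * g30), 3, 2),
      ((((-1 : ℂ)/144) * (star h02) * (star h03) ^ 2 * g03 + ((-1 : ℂ)/72) * (star h02) * h30 * (star h03) * g12 + ((-1 : ℂ)/144) * (star h02) * h30 ^ 2 * g21 + ((-1 : ℂ)/144) * h20 * (star h03) ^ 2 * g12 + ((-1 : ℂ)/72) * h20 * h30 * (star h03) * g21 + ((-1 : ℂ)/144) * h20 * h30 ^ 2 * g30), 4, 0),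
      ((((-1 : ℂ)/144) * (star h12) * (star h03) ^ 2 * g03 + ((-1 : ℂ)/72) * h30 * (star h12) * (star h03) * g12 + ((-1 : ℂ)/144) * h30 ^ 2 * (star h12) * g21), 4, 1),
      ((((-1 : ℂ)/1296) * (star h03) ^ 3 * g03 + ((-1 : ℂ)/432) * h30 * (star h03) ^ 2 * g12 + ((-1 : ℂ)/432) * h30 ^ 2 * (star h03) * g21 + ((-1 : ℂ)/1296) * h30 ^ 3 * g30), 5, 0)] := ⟨_, rfl⟩
  obtain ⟨L2, hL2⟩ : ∃ L : List (ℂ × ℕ × ℕ), L = [((((-1 : ℂ)/6) * (star h03) * g02 + ((-1 : ℂ)/2) * (star h12) * g11 + ((-1 : ℂ)/6) * h30 * g11 + ((-1 : ℂ)/2) * (star h02) * g12 + ((-1 : ℂ)/2) * (star h11) * g21 + ((-1 : ℂ)/2) * (star h11) * (star h02) * g02 + ((-1 : ℂ)/2) * h11 * g30 + ((-1 : ℂ)/2) * h11 * (star h02) * g11 + ((-1 : ℂ)/2) * h20 * g21 + h20 * c₁ + ((-1 : ℂ)/2) * h20 * (star h11) * g11 + ((-1 : ℂ)/2) * h20 *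 h11 * g20), 0, 0),
      ((((-1 : ℂ)/12) * (star h03) * g03 + ((-1 : ℂ)/2) * (star h12) * g12 + ((-1 : ℂ)/4) * h12 * g30 + ((-1 : ℂ)/12) * h30 * g12 + ((-1 : ℂ)/4) * (star h02) * h12 * g11 + ((-1 : ℂ)/2) * (star h11) * (star h12) * g02 + ((-1 : ℂ)/2) * (star h11) * (star h02) * g03 + ((-1 : ℂ)/2) * (star h11) ^ 2 * g12 + ((-1 : ℂ)/12) * (star h20) * (star h03) * g02 + ((-1 : ℂ)/12) * (star h20) * h30 * g11 + ((-1 : ℂ)/4) * (star h20) * (star h02) * g12 + ((-1 : ℂ)/12) * h02 * (star h03) * g11 + ((-1 : ℂ)/12) * h02 * h30 * g20 + ((-1 : ℂ)/4) * h02 * (star h02) * g21 + ((-1 : ℂ)/2) * h11 * (star h12) * g11 + ((-1 : ℂ)/2) * h11 * (star h02) * g12 + (-1 : ℂ) * h11 * (star h11) * g21 + ((-1 : ℂ)/2) * h11 ^ 2 * g30 + ((-1 : ℂ)/4) * h20 * h12 * g20 + ((-1 : ℂ)/2) * h20 * (star h11) * g12 + ((-1 : ℂ)/4) * h20 * (star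 h20) * g21 + ((-1 : ℂ)/4) * h20 * h02 * g30 + ((-1 : ℂ)/2) * h20 * h11 * g21), 0, 1),
      ((((-1 : ℂ)/36) * (star h30) * (star h03) * g02 + ((-1 : ℂ)/36) * h03 * (star h03) * g11 + ((-1 : ℂ)/4) * h12 * (star h12) * g11 + ((-1 : ℂ)/36) * h30 * (star h30) * g11 + ((-1 : ℂ)/36) * h30 * h03 * g20 + ((-1 : ℂ)/12) * (star h02) * (star h30) * g12 + ((-1 : ℂ)/12) * (star h02) * h03 * g21 + ((-1 : ℂ)/4) * (star h02) * h12 * g12 + ((-1 : ℂ)/2) * (star h11) * (star h12) * g03 + ((-1 : ℂ)/2) * (star h11) * h12 * g21 + ((-1 : ℂ)/6) * (star h11) ^ 3 * g03 + ((-1 : ℂ)/12) * (star h20) * (star h03) * g03 + ((-1 : ℂ)/4) * (star h20) * (star h12) * g12 + ((-1 : ℂ)/12) * (star h20) * h30 * g12 + ((-1 : ℂ)/4) * (star h20) * (star h11) * (star h02) * g03 + ((-1 : ℂ)/12) * h02 * (star h03) * g12 + ((-1 : ℂ)/4) * h02 * (star h12) * g21 + ((-1 : ℂ)/12) * h02 *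 h30 * g21 + ((-1 : ℂ)/4) * h02 * (star h11) * (star h02) * g12 + ((-1 : ℂ)/2) * h11 * (star h12) * g12 + ((-1 : ℂ)/2) * h11 * h12 * g30 + ((-1 : ℂ)/2) * h11 * (star h11) ^ 2 * g12 + ((-1 : ℂ)/4) * h11 * (star h20) * (star h02) * g12 + ((-1 : ℂ)/4) * h11 * h02 * (star h02) * g21 + ((-1 : ℂ)/2) * h11 ^ 2 * (star h11) * g21 + ((-1 : ℂ)/6) * h11 ^ 3 * g30 + ((-1 : ℂ)/12) * h20 * (star h30) * g21 + ((-1 : ℂ)/12) * h20 * h03 * g30 + ((-1 : ℂ)/4) * h20 * h12 * g21 + ((-1 : ℂ)/4) * h20 * (star h20) * (star h11) * g12 + ((-1 : ℂ)/4) * h20 * h02 * (star h11) * g21 + ((-1 : ℂ)/4) * h20 * h11 * (star h20) * g21 + ((-1 : ℂ)/4) * h20 * h11 * h02 * g30), 0, 2),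
      ((((-1 : ℂ)/36) * (star h30) * (star h03) * g03 + ((-1 : ℂ)/12) * (star h30) * (star h12) * g12 + ((-1 : ℂ)/36) * h03 * (star h03) * g12 + ((-1 : ℂ)/12) * h03 * (star h12) * g21 + ((-1 : ℂ)/4) * h12 * (star h12) * g12 + ((-1 : ℂ)/8) * h12 ^ 2 * g30 + ((-1 : ℂ)/36) * h30 * (star h30) * g12 + ((-1 : ℂ)/36) * h30 * h03 * g21 + ((-1 : ℂ)/12) * (star h11) * (star h02) * (star h30) * g03 + ((-1 : ℂ)/12) * (star h11) * (star h02) * h03 * g12 + ((-1 : ℂ)/4) * (star h11) ^ 2 * h12 * g12 + ((-1 : ℂ)/8) * (star h20) * (star h02) * h12 * g12 + ((-1 : ℂ)/4) * (star h20) * (star h11) * (star h12) * g03 + ((-1 : ℂ)/48) * (star h20) ^ 2 * (star h03) * g03 + ((-1 : ℂ)/48) * (star h20) ^ 2 * h30 * g12 + ((-1 : ℂ)/8) * h02 * (star h02) * h12 * g21 + ((-1 : ℂ)/4) * h02 * (star h11) * (star h12) * g12 + ((-1 : ℂ)/24) * h02 * (star h20) * (star h03) * g12 + ((-1 : ℂ)/24)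 * h02 * (star h20) * h30 * g21 + ((-1 : ℂ)/48) * h02 ^ 2 * (star h03) * g21 + ((-1 : ℂ)/48) * h02 ^ 2 * h30 * g30 + ((-1 : ℂ)/12) * h11 * (star h02) * (star h30) * g12 + ((-1 : ℂ)/12) * h11 * (star h02) * h03 * g21 + ((-1 : ℂ)/2) * h11 * (star h11) * h12 * g21 + ((-1 : ℂ)/4) * h11 * (star h20) * (star h12) * g12 + ((-1 : ℂ)/4) * h11 * h02 * (star h12) * g21 + ((-1 : ℂ)/4) * h11 ^ 2 * h12 * g30 + ((-1 : ℂ)/12) * h20 * (star h11) * (star h30) * g12 + ((-1 : ℂ)/12) * h20 * (star h11) * h03 * g21 + ((-1 : ℂ)/8) * h20 * (star h20) * h12 * g21 + ((-1 : ℂ)/8) * h20 * h02 * h12 * g30 + ((-1 : ℂ)/12) * h20 * h11 * (star h30) * g21 + ((-1 : ℂ)/12) * h20 * h11 * h03 * g30), 0, 3),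
      ((((-1 : ℂ)/24) * (star h02) * h12 * (star h30) * g12 + ((-1 : ℂ)/24) * (star h02) * h12 * h03 * g21 + ((-1 : ℂ)/12) * (star h11) * (star h30) * (star h12) * g03 + ((-1 : ℂ)/12) * (star h11) * h03 * (star h12) * g12 + ((-1 : ℂ)/8) * (star h11) * h12 ^ 2 * g21 + ((-1 : ℂ)/72) * (star h20) * (star h30) * (star h03) * g03 + ((-1 : ℂ)/72) * (star h20) * h03 * (star h03) * g12 + ((-1 : ℂ)/8) * (star h20) * h12 * (star h12) * g12 + ((-1 : ℂ)/72) * (star h20) * h30 * (star h30) * g12 + ((-1 : ℂ)/72) * (star h20) * h30 * h03 * g21 + ((-1 : ℂ)/72) * h02 * (star h30) * (star h03) * g12 + ((-1 : ℂ)/72) * h02 * h03 * (star h03) * g21 + ((-1 : ℂ)/8) * h02 * h12 * (star h12) * g21 + ((-1 : ℂ)/72) * h02 * h30 * (star h30) * g21 + ((-1 : ℂ)/72) * h02 * h30 * h03 * g30 + ((-1 : ℂ)/12) * h11 * (star h30) * (star h12) * g12 + ((-1 : ℂ)/12) * h11 * h03 * (star h12) * g21 + ((-1 : ℂ)/8)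 * h11 * h12 ^ 2 * g30 + ((-1 : ℂ)/24) * h20 * h12 * (star h30) * g21 + ((-1 : ℂ)/24) * h20 * h12 * h03 * g30), 0, 4),
      ((((-1 : ℂ)/432) * (star h30) ^ 2 * (star h03) * g03 + ((-1 : ℂ)/216) * h03 * (star h30) * (star h03) * g12 + ((-1 : ℂ)/432) * h03 ^ 2 * (star h03) * g21 + ((-1 : ℂ)/24) * h12 * (star h30) * (star h12) * g12 + ((-1 : ℂ)/24) * h12 * h03 * (star h12) * g21 + ((-1 : ℂ)/48) * h12 ^ 3 * g30 + ((-1 : ℂ)/432) * h30 * (star h30) ^ 2 * g12 + ((-1 : ℂ)/216) * h30 * h03 * (star h30) * g21 + ((-1 : ℂ)/432) * h30 * h03 ^ 2 * g30), 0, 5)] := ⟨_, rfl⟩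
  obtain ⟨L3, hL3⟩ : ∃ L : List (ℂ × ℕ × ℕ), L = [((((-1 : ℂ)/2) * (star h12) * g02 + ((-1 : ℂ)/2) * h12 * g20 + ((-1 : ℂ)/4) * (star h02) * g03 + (-1 : ℂ) * (star h11) * g12 + ((-1 : ℂ)/2) * (star h11) ^ 2 * g02 + ((-1 : ℂ)/4) * (star h20) * g21 + ((-1 : ℂ)/4) * (star h20) * (star h02) * g02 + ((-1 : ℂ)/4) * h02 * g30 + ((-1 : ℂ)/4) * h02 * (star h02) * g11 + (-1 : ℂ) * h11 * g21 + h11 * (star c₁) + h11 * c₁ + (-1 : ℂ) * h11 * (star h11) * g11 + ((-1 : ℂ)/2) * h11 ^ 2 * g20 + ((-1 : ℂ)/4) * h20 * g12 + ((-1 : ℂ)/4) * h20 * (star h20) * g11 + ((-1 : ℂ)/4) * h20 * h02 * g20), 0, 0),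
      ((((-1 : ℂ)/4) * (star h12) * g03 + ((-1 : ℂ)/12) * (star h30) * g21 + ((-1 : ℂ)/12) * h03 * g30 + ((-1 : ℂ)/2) * h12 * g21 + h12 * (star c₁) + ((1 : ℂ)/2) * h12 * c₁ + ((-1 : ℂ)/12) * (star h02) * (star h30) * g02 + ((-1 : ℂ)/12) * (star h02) * h03 * g11 + ((-1 : ℂ)/2) * (star h11) * h12 * g11 + ((-1 : ℂ)/2) * (star h11) ^ 2 * g03 + ((-1 : ℂ)/4) * (star h20) * (star h12) * g02 + ((-1 : ℂ)/4) * (star h20) * (star h02) * g03 + ((-1 : ℂ)/2) * (star h20) * (star h11) * g12 + ((-1 : ℂ)/4) * h02 * (star h12) * g11 + ((-1 : ℂ)/4) * h02 * (star h02) * g12 + ((-1 : ℂ)/2) * h02 * (star h11) * g21 + ((-1 : ℂ)/2) * h11 * h12 * g20 + (-1 : ℂ) * h11 * (star h11) * g12 + ((-1 : ℂ)/2) * h11 * (star h20) * g21 + ((-1 : ℂ)/2) * h11 * h02 * g30 + ((-1 : ℂ)/2) * h11 ^ 2 * g21 + ((-1 : ℂ)/12) * h20 * (star h30) * g11 + ((-1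 : ℂ)/12) * h20 * h03 * g20 + ((-1 : ℂ)/4) * h20 * (star h20) * g12 + ((-1 : ℂ)/4) * h20 * h02 * g21), 0, 1),
      ((((-1 : ℂ)/12) * (star h30) * (star h12) * g02 + ((-1 : ℂ)/12) * h03 * (star h12) * g11 + ((-1 : ℂ)/8) * h12 ^ 2 * g20 + ((-1 : ℂ)/12) * (star h02) * (star h30) * g03 + ((-1 : ℂ)/12) * (star h02) * h03 * g12 + ((-1 : ℂ)/6) * (star h11) * (star h30) * g12 + ((-1 : ℂ)/6) * (star h11) * h03 * g21 + ((-1 : ℂ)/2) * (star h11) * h12 * g12 + ((-1 : ℂ)/4) * (star h20) * (star h12) * g03 + ((-1 : ℂ)/4) * (star h20) * h12 * g21 + ((-1 : ℂ)/4) * (star h20) * (star h11) ^ 2 * g03 + ((-1 : ℂ)/16) * (star h20) ^ 2 * (star h02) * g03 + ((-1 : ℂ)/4) * h02 * (star h12) * g12 + ((-1 : ℂ)/4) * h02 * h12 * g30 + ((-1 : ℂ)/4) * h02 * (star h11) ^ 2 * g12 + ((-1 : ℂ)/8) * h02 * (star h20) * (star h02) * g12 + ((-1 : ℂ)/16) *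 h02 ^ 2 * (star h02) * g21 + ((-1 : ℂ)/6) * h11 * (star h30) * g21 + ((-1 : ℂ)/6) * h11 * h03 * g30 + ((-1 : ℂ)/2) * h11 * h12 * g21 + ((-1 : ℂ)/2) * h11 * (star h20) * (star h11) * g12 + ((-1 : ℂ)/2) * h11 * h02 * (star h11) * g21 + ((-1 : ℂ)/4) * h11 ^ 2 * (star h20) * g21 + ((-1 : ℂ)/4) * h11 ^ 2 * h02 * g30 + ((-1 : ℂ)/12) * h20 * (star h30) * g12 + ((-1 : ℂ)/12) * h20 * h03 * g21 + ((-1 : ℂ)/16) * h20 * (star h20) ^ 2 * g12 + ((-1 : ℂ)/8) * h20 * h02 * (star h20) * g21 + ((-1 : ℂ)/16) * h20 * h02 ^ 2 * g30), 0, 2),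
      ((((-1 : ℂ)/12) * (star h30) * (star h12) * g03 + ((-1 : ℂ)/12) * h03 * (star h12) * g12 + ((-1 : ℂ)/12) * h12 * (star h30) * g21 + ((-1 : ℂ)/12) * h12 * h03 * g30 + ((-1 : ℂ)/8) * h12 ^ 2 * g21 + ((-1 : ℂ)/12) * (star h11) ^ 2 * (star h30) * g03 + ((-1 : ℂ)/12) * (star h11) ^ 2 * h03 * g12 + ((-1 : ℂ)/24) * (star h20) * (star h02) * (star h30) * g03 + ((-1 : ℂ)/24) * (star h20) * (star h02) * h03 * g12 + ((-1 : ℂ)/4) * (star h20) * (star h11) * h12 * g12 + ((-1 : ℂ)/16) * (star h20) ^ 2 * (star h12) * g03 + ((-1 : ℂ)/24) * h02 * (star h02) * (star h30) * g12 + ((-1 : ℂ)/24) * h02 * (star h02) * h03 * g21 + ((-1 : ℂ)/4) * h02 * (star h11) * h12 * g21 + ((-1 : ℂ)/8) * h02 * (star h20) * (star h12) * g12 + ((-1 : ℂ)/16) * h02 ^ 2 * (star h12) * g21 + ((-1 : ℂ)/6) * h11 * (star h11) * (star h30) * g12 + ((-1 : ℂ)/6) * h11 * (star h11) * h03 * g21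 + ((-1 : ℂ)/4) * h11 * (star h20) * h12 * g21 + ((-1 : ℂ)/4) * h11 * h02 * h12 * g30 + ((-1 : ℂ)/12) * h11 ^ 2 * (star h30) * g21 + ((-1 : ℂ)/12) * h11 ^ 2 * h03 * g30 + ((-1 : ℂ)/24) * h20 * (star h20) * (star h30) * g12 + ((-1 : ℂ)/24) * h20 * (star h20) * h03 * g21 + ((-1 : ℂ)/24) * h20 * h02 * (star h30) * g21 + ((-1 : ℂ)/24) * h20 * h02 * h03 * g30), 0, 3),
      ((((-1 : ℂ)/144) * (star h02) * (star h30) ^ 2 * g03 + ((-1 : ℂ)/72) * (star h02) * h03 * (star h30) * g12 + ((-1 : ℂ)/144) * (star h02) * h03 ^ 2 * g21 + ((-1 : ℂ)/12) * (star h11) * h12 * (star h30) * g12 + ((-1 : ℂ)/12) * (star h11) * h12 * h03 * g21 + ((-1 : ℂ)/24) * (star h20) * (star h30) * (star h12) * g03 + ((-1 : ℂ)/24) * (star h20) * h03 * (star h12) * g12 + ((-1 : ℂ)/16) * (star h20) * h12 ^ 2 * g21 + ((-1 : ℂ)/24) * h02 * (star h30) * (star h12) * g12 + ((-1 : ℂ)/24)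 * h02 * h03 * (star h12) * g21 + ((-1 : ℂ)/16) * h02 * h12 ^ 2 * g30 + ((-1 : ℂ)/12) * h11 * h12 * (star h30) * g21 + ((-1 : ℂ)/12) * h11 * h12 * h03 * g30 + ((-1 : ℂ)/144) * h20 * (star h30) ^ 2 * g12 + ((-1 : ℂ)/72) * h20 * h03 * (star h30) * g21 + ((-1 : ℂ)/144) * h20 * h03 ^ 2 * g30), 0, 4),
      ((((-1 : ℂ)/144) * (star h30) ^ 2 * (star h12) * g03 + ((-1 : ℂ)/72) * h03 * (star h30) * (star h12) * g12 + ((-1 : ℂ)/144) * h03 ^ 2 * (star h12) * g21 + ((-1 : ℂ)/48) * h12 ^ 2 * (star h30) * g21 + ((-1 : ℂ)/48) * h12 ^ 2 * h03 * g30), 0, 5)] := ⟨_, rfl⟩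
  obtain ⟨L4, hL4⟩ : ∃ L : List (ℂ × ℕ × ℕ), L = [((((-1 : ℂ)/6) * (star h30) * g11 + ((-1 : ℂ)/6) * h03 * g20 + ((-1 : ℂ)/2) * h12 * g11 + ((-1 : ℂ)/2) * (star h11) * g03 + ((-1 : ℂ)/2) * (star h20) * g12 + ((-1 : ℂ)/2) * (star h20) * (star h11) * g02 + ((-1 : ℂ)/2) * h02 * g21 + h02 * (star c₁) + ((-1 : ℂ)/2) * h02 * (star h11) * g11 + ((-1 : ℂ)/2) * h11 * g12 + ((-1 : ℂ)/2) * h11 * (star h20) * g11 + ((-1 : ℂ)/2) * h11 * h02 * g20), 0, 0),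
      ((((-1 : ℂ)/6) * (star h30) * g12 + ((-1 : ℂ)/6) * h03 * g21 + ((1 : ℂ)/2) * h03 * (star c₁) + ((-1 : ℂ)/4) * h12 * g12 + ((-1 : ℂ)/6) * (star h11) * (star h30) * g02 + ((-1 : ℂ)/6) * (star h11) * h03 * g11 + ((-1 : ℂ)/4) * (star h20) * h12 * g11 + ((-1 : ℂ)/2) * (star h20) * (star h11) * g03 + ((-1 : ℂ)/8) * (star h20) ^ 2 * g12 + ((-1 : ℂ)/4) * h02 * h12 * g20 + ((-1 : ℂ)/2) * h02 * (star h11) * g12 + ((-1 : ℂ)/4) * h02 * (star h20) * g21 + ((-1 : ℂ)/8) * h02 ^ 2 * g30 + ((-1 : ℂ)/6) * h11 * (star h30) * g11 + ((-1 : ℂ)/6) * h11 * h03 * g20 + ((-1 : ℂ)/2) * h11 * (star h20) * g12 + ((-1 : ℂ)/2) * h11 * h02 * g21), 0, 1),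
      ((((-1 : ℂ)/12) * h12 * (star h30) * g11 + ((-1 : ℂ)/12) * h12 * h03 * g20 + ((-1 : ℂ)/6) * (star h11) * (star h30) * g03 + ((-1 : ℂ)/6) * (star h11) * h03 * g12 + ((-1 : ℂ)/12) * (star h20) * (star h30) * g12 + ((-1 : ℂ)/12) * (star h20) * h03 * g21 + ((-1 : ℂ)/4) * (star h20) * h12 * g12 + ((-1 : ℂ)/8) * (star h20) ^ 2 * (star h11) * g03 + ((-1 : ℂ)/12) * h02 * (star h30) * g21 + ((-1 : ℂ)/12) * h02 * h03 * g30 + ((-1 : ℂ)/4) * h02 * h12 * g21 + ((-1 : ℂ)/4) * h02 * (star h20) * (star h11) * g12 + ((-1 : ℂ)/8) * h02 ^ 2 * (star h11) * g21 + ((-1 : ℂ)/6) * h11 * (star h30) * g12 + ((-1 : ℂ)/6) * h11 * h03 * g21 + ((-1 : ℂ)/8) * h11 * (star h20) ^ 2 * g12 + ((-1 : ℂ)/4) * h11 * h02 * (star h20) * g21 + ((-1 : ℂ)/8) * h11 * h02 ^ 2 * g30), 0, 2),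
      ((((-1 : ℂ)/72) * (star h30) ^ 2 * g12 + ((-1 : ℂ)/36) * h03 * (star h30) * g21 + ((-1 : ℂ)/72) * h03 ^ 2 * g30 + ((-1 : ℂ)/12) * h12 * (star h30) * g12 + ((-1 : ℂ)/12) * h12 * h03 * g21 + ((-1 : ℂ)/12) * (star h20) * (star h11) * (star h30) * g03 + ((-1 : ℂ)/12) * (star h20) * (star h11) * h03 * g12 + ((-1 : ℂ)/16) * (star h20) ^ 2 * h12 * g12 + ((-1 : ℂ)/12) * h02 * (star h11) * (star h30) * g12 + ((-1 : ℂ)/12) * h02 * (star h11) * h03 * g21 + ((-1 : ℂ)/8) * h02 * (star h20) * h12 * g21 + ((-1 : ℂ)/16) * h02 ^ 2 * h12 * g30 + ((-1 : ℂ)/12) * h11 * (star h20) * (star h30) * g12 + ((-1 : ℂ)/12) * h11 * (star h20) * h03 * g21 + ((-1 : ℂ)/12) * h11 * h02 * (star h30) * g21 + ((-1 : ℂ)/12) * h11 * h02 * h03 * g30), 0, 3),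
      ((((-1 : ℂ)/72) * (star h11) * (star h30) ^ 2 * g03 + ((-1 : ℂ)/36) * (star h11) * h03 * (star h30) * g12 + ((-1 : ℂ)/72) * (star h11) * h03 ^ 2 * g21 + ((-1 : ℂ)/24) * (star h20) * h12 * (star h30) * g12 + ((-1 : ℂ)/24) * (star h20) * h12 * h03 * g21 + ((-1 : ℂ)/24) * h02 * h12 * (star h30) * g21 + ((-1 : ℂ)/24) * h02 * h12 * h03 * g30 + ((-1 : ℂ)/72) * h11 * (star h30) ^ 2 * g12 + ((-1 : ℂ)/36) * h11 * h03 * (star h30) * g21 + ((-1 : ℂ)/72) * h11 * h03 ^ 2 * g30), 0, 4),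
      ((((-1 : ℂ)/144) * h12 * (star h30) ^ 2 * g12 + ((-1 : ℂ)/72) * h12 * h03 * (star h30) * g21 + ((-1 : ℂ)/144) * h12 * h03 ^ 2 * g30), 0, 5)] := ⟨_, rfl⟩
  obtain ⟨L5, hL5⟩ : ∃ L : List (ℂ × ℕ × ℕ), L = [((((-1 : ℂ)/6) * (star h30) * g02 + ((-1 : ℂ)/6) * h03 * g11 + ((-1 : ℂ)/4) * (star h20) * g03 + ((-1 : ℂ)/8) * (star h20) ^ 2 * g02 + ((-1 : ℂ)/4) * h02 * g12 + ((-1 : ℂ)/4) * h02 * (star h20) * g11 + ((-1 : ℂ)/8) * h02 ^ 2 * g20), 0, 0),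
      ((((-1 : ℂ)/12) * (star h30) * g03 + ((-1 : ℂ)/12) * h03 * g12 + ((-1 : ℂ)/12) * (star h20) * (star h30) * g02 + ((-1 : ℂ)/12) * (star h20) * h03 * g11 + ((-1 : ℂ)/8) * (star h20) ^ 2 * g03 + ((-1 : ℂ)/12) * h02 * (star h30) * g11 + ((-1 : ℂ)/12) * h02 * h03 * g20 + ((-1 : ℂ)/4) * h02 * (star h20) * g12 + ((-1 : ℂ)/8) * h02 ^ 2 * g21), 0, 1),
      ((((-1 : ℂ)/72) * (star h30) ^ 2 * g02 + ((-1 : ℂ)/36) * h03 * (star h30) * g11 + ((-1 : ℂ)/72) * h03 ^ 2 * g20 + ((-1 : ℂ)/12) * (star h20) * (star h30) * g03 + ((-1 : ℂ)/12) * (star h20) * h03 * g12 + ((-1 : ℂ)/48) * (star h20) ^ 3 * g03 + ((-1 : ℂ)/12) * h02 * (star h30) * g12 + ((-1 : ℂ)/12) * h02 * h03 * g21 + ((-1 : ℂ)/16) * h02 * (star h20) ^ 2 * g12 + ((-1 : ℂ)/16) * h02 ^ 2 * (star h20) * g21 + ((-1 : ℂ)/48) * h02 ^ 3 * g30), 0,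 2),
      ((((-1 : ℂ)/72) * (star h30) ^ 2 * g03 + ((-1 : ℂ)/36) * h03 * (star h30) * g12 + ((-1 : ℂ)/72) * h03 ^ 2 * g21 + ((-1 : ℂ)/48) * (star h20) ^ 2 * (star h30) * g03 + ((-1 : ℂ)/48) * (star h20) ^ 2 * h03 * g12 + ((-1 : ℂ)/24) * h02 * (star h20) * (star h30) * g12 + ((-1 : ℂ)/24) * h02 * (star h20) * h03 * g21 + ((-1 : ℂ)/48) * h02 ^ 2 * (star h30) * g21 + ((-1 : ℂ)/48) * h02 ^ 2 * h03 * g30), 0, 3),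
      ((((-1 : ℂ)/144) * (star h20) * (star h30) ^ 2 * g03 + ((-1 : ℂ)/72) * (star h20) * h03 * (star h30) * g12 + ((-1 : ℂ)/144) * (star h20) * h03 ^ 2 * g21 + ((-1 : ℂ)/144) * h02 * (star h30) ^ 2 * g12 + ((-1 : ℂ)/72) * h02 * h03 * (star h30) * g21 + ((-1 : ℂ)/144) * h02 * h03 ^ 2 * g30), 0, 4),
      ((((-1 : ℂ)/1296) * (star h30) ^ 3 * g03 + ((-1 : ℂ)/432) * h03 * (star h30) ^ 2 * g12 + ((-1 : ℂ)/432) * h03 ^ 2 * (star h30) * g21 + ((-1 : ℂ)/1296) * h03 ^ 3 * g30), 0, 5)] := ⟨_, rfl⟩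
  obtain ⟨φ, hφ⟩ : ∃ φ : ℂ → ℂ, ∀ w : ℂ, φ w = w + h20 / 2 * w ^ 2 + h11 * w * star w
      + h02 / 2 * (star w) ^ 2 + h30 / 6 * w ^ 3 + h12 / 2 * w * (star w) ^ 2
      + h03 / 6 * (star w) ^ 3 :=
    ⟨fun w => w + h20 / 2 * w ^ 2 + h11 * w * star w + h02 / 2 * (star w) ^ 2
      + h30 / 6 * w ^ 3 + h12 / 2 * w * (star w) ^ 2 + h03 / 6 * (star w) ^ 3,
     fun _ => rfl⟩
  have key : ∀ W : ℂ,
      (1 + h20 * W + h11 * star W + h30 / 2 * W ^ 2 + h12 / 2 * (star W) ^ 2) * N W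
        + (h11 * W + h02 * star W + h12 * W * star W + h03 / 2 * (star W) ^ 2) * star (N W)
        - G (φ W)
      = W ^ 4 * (star W) ^ 0 * pEval L1 W + W ^ 3 * (star W) ^ 1 * pEval L2 W
        + W ^ 2 * (star W) ^ 2 * pEval L3 W + W ^ 1 * (star W) ^ 3 * pEval L4 W
        + W ^ 0 * (star W) ^ 4 * pEval L5 W := by
    intro W
    rw [hφ W, hG, hN, hL1, hL2, hL3, hL4, hL5]
    simp only [pEval, star_add, star_mul, star_pow, star_div₀, star_ofNat, star_one, star_star]
    linear_combination ((((-1 : ℂ)/2) * W ^ 2 + ((-1 : ℂ)/2) * h02 * W * (star W) ^ 2 + (-1 : ℂ) * h11 * W ^ 2 * (star W) + ((-1 : ℂ)/2) * h20 * W ^ 3)) * e20 + (((-1 : ℂ) * W * (star W) + ((-1 : ℂ)/2) * (star h02) * W ^ 3 + (-1 : ℂ) * (star h11) * W ^ 2 * (star W) + ((-1 : ℂ)/2) * (star h20) * W * (star W) ^ 2 + ((-1 : ℂ)/2) * h02 * (star W) ^ 3 + (-1 : ℂ) * h11 * W * (star W) ^ 2 + ((-1 : ℂ)/2) * h20 *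 W ^ 2 * (star W))) * e11 + ((((-1 : ℂ)/2) * (star W) ^ 2 + ((-1 : ℂ)/2) * (star h02) * W ^ 2 * (star W) + (-1 : ℂ) * (star h11) * W * (star W) ^ 2 + ((-1 : ℂ)/2) * (star h20) * (star W) ^ 3)) * e02 + ((((-1 : ℂ)/2) * W ^ 2 * (star W))) * e21
      + ((((-1 : ℂ)/6) * W ^ 3)) * e30 + ((((-1 : ℂ)/2) * W * (star W) ^ 2)) * e12 + ((((-1 : ℂ)/6) * (star W) ^ 3)) * e03
  refine ⟨h30, h12, h03, φ, hφ,
    pAbs L1 + pAbs L2 + pAbs L3 + pAbs L4 + pAbs L5 + 1, ?_, ?_⟩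
  · have n1 := pAbs_nonneg L1
    have n2 := pAbs_nonneg L2
    have n3 := pAbs_nonneg L3
    have n4 := pAbs_nonneg L4
    have n5 := pAbs_nonneg L5
    linarith
  · intro w hw
    rw [key w]
    have t1 := term_bound L1 w hw 4 0 (by norm_num)
    have t2 := term_bound L2 w hw 3 1 (by norm_num)
    have t3 := term_bound L3 w hw 2 2 (by norm_num)
    have t4 := term_bound L4 w hw 1 3 (by norm_num)
    have t5 := term_bound L5 w hw 0 4 (by norm_num)
    have h4 : (0:ℝ) ≤ ‖w‖ ^ 4 := pow_nonneg (norm_nonneg w) 4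
    calc ‖w ^ 4 * (star w) ^ 0 * pEval L1 w + w ^ 3 * (star w) ^ 1 * pEval L2 w
          + w ^ 2 * (star w) ^ 2 * pEval L3 w + w ^ 1 * (star w) ^ 3 * pEval L4 w
          + w ^ 0 * (star w) ^ 4 * pEval L5 w‖
        ≤ ‖w ^ 4 * (star w) ^ 0 * pEval L1 w + w ^ 3 * (star w) ^ 1 * pEval L2 w
          + w ^ 2 * (star w) ^ 2 * pEval L3 w + w ^ 1 * (star w) ^ 3 * pEval L4 w‖
          + ‖w ^ 0 * (star w) ^ 4 * pEval L5 w‖ := norm_add_le _ _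
      _ ≤ (‖w ^ 4 * (star w) ^ 0 * pEval L1 w + w ^ 3 * (star w) ^ 1 * pEval L2 w
          + w ^ 2 * (star w) ^ 2 * pEval L3 w‖ + ‖w ^ 1 * (star w) ^ 3 * pEval L4 w‖)
          + ‖w ^ 0 * (star w) ^ 4 * pEval L5 w‖ :=
            add_le_add_left (norm_add_le _ _) _
      _ ≤ ((‖w ^ 4 * (star w) ^ 0 * pEval L1 w + w ^ 3 * (star w) ^ 1 * pEval L2 w‖
          + ‖w ^ 2 * (star w) ^ 2 * pEval L3 w‖)
          + ‖w ^ 1 * (star w) ^ 3 * pEval L4 w‖)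
          + ‖w ^ 0 * (star w) ^ 4 * pEval L5 w‖ :=
            add_le_add_left (add_le_add_left (norm_add_le _ _) _) _
      _ ≤ (((‖w ^ 4 * (star w) ^ 0 * pEval L1 w‖
          + ‖w ^ 3 * (star w) ^ 1 * pEval L2 w‖)
          + ‖w ^ 2 * (star w) ^ 2 * pEval L3 w‖)
          + ‖w ^ 1 * (star w) ^ 3 * pEval L4 w‖)
          + ‖w ^ 0 * (star w) ^ 4 * pEval L5 w‖ :=
            add_le_add_left (add_le_add_left (add_le_add_left (norm_add_le _ _) _) _) _
      _ ≤ (((pAbs L1 * ‖w‖ ^ 4 + pAbs L2 * ‖w‖ ^ 4)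
          + pAbs L3 * ‖w‖ ^ 4) + pAbs L4 * ‖w‖ ^ 4)
          + pAbs L5 * ‖w‖ ^ 4 :=
            add_le_add (add_le_add (add_le_add (add_le_add t1 t2) t3) t4) t5
      _ = (pAbs L1 + pAbs L2 + pAbs L3 + pAbs L4 + pAbs L5) * ‖w‖ ^ 4 := by ring
      _ ≤ (pAbs L1 + pAbs L2 + pAbs L3 + pAbs L4 + pAbs L5 + 1) * ‖w‖ ^ 4 := by
            nlinarith
end

section
/- Let β, c, δ, α be positive reals with c > δ and α(c - δ) > δ. Define f : ℝ² → ℝ² by f₁(x₁, x₂) = β x₁ (1 - x₁)(1 + α x₁) - c α x₁ x₂ and f₂(x₁, x₂) = -δ x₂ (1 + α x₁) + c α x₁ x₂, and set x* = (δ/(α(c-δ)), (β/(α(c-δ)))·(1 - δ/(α(c-δ)))). Then f(x*) = (0,0), and the trace of the Jacobian matrix of f at x*, namely ∂f₁/∂x₁(x*) + ∂f₂/∂x₂(x*), equals zero if and only if α = (c+δ)/(c-δ). -/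
/-- the positive equilibrium `x*` of the time-rescaled predator-prey field
is a zero of the field, and the trace of the Jacobian at `x*` (the sum of the partial
derivatives `∂f₁/∂x₁(x*) + ∂f₂/∂x₂(x*)`) vanishes if and only if `α = (c+δ)/(c-δ)`. -/
theorem predator_prey_trace_zero_iff
    (β c δ α : ℝ) (hβ : 0 < β) (hc : 0 < c) (hδ : 0 < δ) (hα : 0 < α)
    (hcδ : δ < c) (hαcδ : δ < α * (c - δ))
    (f₁ f₂ : ℝ → ℝ → ℝ)
    (hf₁ : ∀ x₁ x₂, f₁ x₁ x₂ = β * x₁ * (1 - x₁) * (1 + α * x₁) - c * α * x₁ * x₂)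
    (hf₂ : ∀ x₁ x₂, f₂ x₁ x₂ = -δ * x₂ * (1 + α * x₁) + c * α * x₁ * x₂)
    (x₁s x₂s : ℝ)
    (hx₁s : x₁s = δ / (α * (c - δ)))
    (hx₂s : x₂s = β / (α * (c - δ)) * (1 - δ / (α * (c - δ)))) :
    f₁ x₁s x₂s = 0 ∧ f₂ x₁s x₂s = 0 ∧
      (deriv (fun s => f₁ s x₂s) x₁s + deriv (fun s => f₂ x₁s s) x₂s = 0 ↔
        α = (c + δ) / (c - δ)) := by
  have hD : (0:ℝ) < α * (c - δ) := mul_pos hα (by linarith)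
  have hDne : α * (c - δ) ≠ 0 := ne_of_gt hD
  have hcdne : c - δ ≠ 0 := ne_of_gt (by linarith)
  have hx₁pos : 0 < x₁s := by rw [hx₁s]; positivity
  -- zero of the field
  have hz₁ : f₁ x₁s x₂s = 0 := by
    rw [hf₁, hx₁s, hx₂s]; field_simp; ring
  have hz₂ : f₂ x₁s x₂s = 0 := by
    rw [hf₂, hx₁s, hx₂s]; field_simp; ring
  refine ⟨hz₁, hz₂, ?_⟩
  -- first partial derivative
  have hfun₁ : (fun s => f₁ s x₂s) =
      fun s => -(β*α)*s^3 + (β*(α-1))*s^2 + (β - c*α*x₂s)*s := by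
    funext s; rw [hf₁]; ring
  have hd₁ : HasDerivAt (fun s => f₁ s x₂s)
      (-(β*α)*(3*x₁s^2) + (β*(α-1))*(2*x₁s) + (β - c*α*x₂s)) x₁s := by
    rw [hfun₁]
    have h3 := (hasDerivAt_pow 3 x₁s).const_mul (-(β*α))
    have h2 := (hasDerivAt_pow 2 x₁s).const_mul (β*(α-1))
    have h1 := (hasDerivAt_id x₁s).const_mul (β - c*α*x₂s)
    refine HasDerivAt.congr_deriv ((h3.add h2).add h1) ?_
    push_cast; ring
  -- second partial derivative
  have hfun₂ : (fun s => f₂ x₁s s) = fun s => (-δ*(1+α*x₁s) + c*α*x₁s)*s := by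
    funext s; rw [hf₂]; ring
  have hK : -δ*(1+α*x₁s) + c*α*x₁s = 0 := by
    rw [hx₁s]; field_simp; ring
  have hderiv₂ : deriv (fun s => f₂ x₁s s) x₂s = 0 := by
    rw [hfun₂, hK]
    simp
  rw [hd₁.deriv, hderiv₂, add_zero]
  have hT : -(β*α)*(3*x₁s^2) + (β*(α-1))*(2*x₁s) + (β - c*α*x₂s)
      = (β * x₁s) * (α - (c+δ)/(c-δ)) := by
    rw [hx₁s, hx₂s]; field_simp; ring
  rw [hT, mul_eq_zero, sub_eq_zero]
  have hβx : β * x₁s ≠ 0 := by positivity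
  simp [hβx]
end

section
/- Let β, c, δ be positive reals with c > δ, and set α = (c+δ)/(c-δ). Define f : ℝ² → ℝ² by f₁(x₁, x₂) = β x₁ (1 - x₁)(1 + α x₁) - c α x₁ x₂ and f₂(x₁, x₂) = -δ x₂ (1 + α x₁) + c α x₁ x₂, and set x* = (δ/(c+δ), β c/(c+δ)²). Then f(x*) = (0,0), and the Jacobian matrix J of f at x* satisfies trace(J) = 0 and det(J) = β c² δ/((c-δ)(c+δ)) > 0; consequently the complex eigenvalues of J are purely imaginary, equal to ± i·c·√(βδ/((c-δ)(c+δ))). -/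
open Polynomial

set_option maxHeartbeats 1000000


/-- at the Hopf value `α = (c+δ)/(c-δ)`, the equilibrium
`x* = (δ/(c+δ), βc/(c+δ)²)` of the time-rescaled predator-prey field is a zero of the
field, the Jacobian `J` there has zero trace and determinant `βc²δ/((c-δ)(c+δ)) > 0`,
and its complex eigenvalues (roots of the characteristic polynomial) are exactly
`± i c √(βδ/((c-δ)(c+δ)))`. -/
theorem predator_prey_hopf_eigenvalues
    (β c δ : ℝ) (hβ : 0 < β) (hc : 0 < c) (hδ : 0 < δ) (hcδ : δ < c)
    (α : ℝ) (hα : α = (c + δ) / (c - δ))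
    (f₁ f₂ : ℝ → ℝ → ℝ)
    (hf₁ : ∀ x₁ x₂, f₁ x₁ x₂ = β * x₁ * (1 - x₁) * (1 + α * x₁) - c * α * x₁ * x₂)
    (hf₂ : ∀ x₁ x₂, f₂ x₁ x₂ = -δ * x₂ * (1 + α * x₁) + c * α * x₁ * x₂)
    (x₁s x₂s : ℝ) (hx₁s : x₁s = δ / (c + δ)) (hx₂s : x₂s = β * c / (c + δ) ^ 2)
    (J : Matrix (Fin 2) (Fin 2) ℝ)
    (hJ : J = !![deriv (fun s => f₁ s x₂s) x₁s, deriv (fun s => f₁ x₁s s) x₂s;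
                 deriv (fun s => f₂ s x₂s) x₁s, deriv (fun s => f₂ x₁s s) x₂s]) :
    f₁ x₁s x₂s = 0 ∧ f₂ x₁s x₂s = 0 ∧ J.trace = 0 ∧
    J.det = β * c ^ 2 * δ / ((c - δ) * (c + δ)) ∧ 0 < J.det ∧
    (J.map Complex.ofReal).charpoly.roots =
      {Complex.I * (c : ℂ) * (Real.sqrt (β * δ / ((c - δ) * (c + δ))) : ℂ),
       -(Complex.I * (c : ℂ) * (Real.sqrt (β * δ / ((c - δ) * (c + δ))) : ℂ))} := by
  have hE : (0:ℝ) < c - δ := by linarith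
  have hD : (0:ℝ) < c + δ := by linarith
  have hEne : (c - δ) ≠ 0 := hE.ne'
  have hDne : (c + δ) ≠ 0 := hD.ne'
  -- the four partial derivatives
  have h11 : deriv (fun s => f₁ s x₂s) x₁s = 0 := by
    have hfun : (fun s => f₁ s x₂s)
        = fun s : ℝ => β * s * (1 - s) * (1 + α * s) - c * α * s * x₂s :=
      funext fun s => hf₁ s x₂s
    have h := ((((hasDerivAt_id x₁s).const_mul β).mul
        ((hasDerivAt_id x₁s).const_sub 1)).mul
        (((hasDerivAt_id x₁s).const_mul α).const_add 1)).sub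
        (((hasDerivAt_id x₁s).const_mul (c*α)).mul_const x₂s)
    simp only [id_eq, Pi.mul_def, Pi.sub_def, Pi.add_def] at h
    rw [hfun, h.deriv, hx₁s, hx₂s, hα]
    field_simp
    ring
  have h12 : deriv (fun s => f₁ x₁s s) x₂s = -(c * δ / (c - δ)) := by
    have hfun : (fun s => f₁ x₁s s)
        = fun s : ℝ => β * x₁s * (1 - x₁s) * (1 + α * x₁s) - c * α * x₁s * s :=
      funext fun s => hf₁ x₁s s
    have h := (hasDerivAt_const x₂s (β * x₁s * (1 - x₁s) * (1 + α * x₁s))).sub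
        ((hasDerivAt_id x₂s).const_mul (c * α * x₁s))
    simp only [id_eq, Pi.mul_def, Pi.sub_def, Pi.add_def] at h
    rw [hfun, h.deriv, hx₁s, hα]
    field_simp
    ring
  have h21 : deriv (fun s => f₂ s x₂s) x₁s = β * c / (c + δ) := by
    have hfun : (fun s => f₂ s x₂s)
        = fun s : ℝ => -δ * x₂s * (1 + α * s) + c * α * s * x₂s :=
      funext fun s => hf₂ s x₂s
    have h := ((((hasDerivAt_id x₁s).const_mul α).const_add 1).const_mul
        (-δ * x₂s)).add (((hasDerivAt_id x₁s).const_mul (c*α)).mul_const x₂s)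
    simp only [id_eq, Pi.mul_def, Pi.sub_def, Pi.add_def] at h
    rw [hfun, h.deriv, hx₂s, hα]
    field_simp
    ring
  have h22 : deriv (fun s => f₂ x₁s s) x₂s = 0 := by
    have hfun : (fun s => f₂ x₁s s)
        = fun s : ℝ => -δ * s * (1 + α * x₁s) + c * α * x₁s * s :=
      funext fun s => hf₂ x₁s s
    have h := (((hasDerivAt_id x₂s).const_mul (-δ)).mul_const (1 + α * x₁s)).add
        ((hasDerivAt_id x₂s).const_mul (c * α * x₁s))
    simp only [id_eq, Pi.mul_def, Pi.sub_def, Pi.add_def] at h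
    rw [hfun, h.deriv, hx₁s, hα]
    field_simp
    ring
  have hJ' : J = !![0, -(c * δ / (c - δ)); β * c / (c + δ), 0] := by
    rw [hJ, h11, h12, h21, h22]
  refine ⟨?_, ?_, ?_, ?_, ?_, ?_⟩
  · rw [hf₁, hx₁s, hx₂s, hα]; field_simp; ring
  · rw [hf₂, hx₁s, hx₂s, hα]; field_simp; ring
  · simp [hJ', Matrix.trace_fin_two]
  · rw [hJ']
    simp [Matrix.det_fin_two_of]
    field_simp
  · rw [hJ']
    simp [Matrix.det_fin_two_of]
    positivity
  · set r : ℂ := Complex.I * (c : ℂ) * (Real.sqrt (β * δ / ((c - δ) * (c + δ))) : ℂ) with hr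
    have hmap : J.map Complex.ofReal
        = !![0, ((-(c * δ / (c - δ)) : ℝ) : ℂ); ((β * c / (c + δ) : ℝ) : ℂ), 0] := by
      rw [hJ']
      ext i j
      fin_cases i <;> fin_cases j <;> simp [Matrix.map_apply]
    have hsq : (Real.sqrt (β * δ / ((c - δ) * (c + δ)))) ^ 2
        = β * δ / ((c - δ) * (c + δ)) := Real.sq_sqrt (by positivity)
    have hr2 : r ^ 2 = -(((β * c ^ 2 * δ / ((c - δ) * (c + δ))) : ℝ) : ℂ) := by
      have : r ^ 2 = Complex.I ^ 2 * (c:ℂ) ^ 2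
          * ((Real.sqrt (β * δ / ((c - δ) * (c + δ))) : ℝ) : ℂ) ^ 2 := by
        rw [hr]; ring
      rw [this, Complex.I_sq,
        show ((Real.sqrt (β * δ / ((c - δ) * (c + δ))) : ℝ) : ℂ) ^ 2
            = ((β * δ / ((c - δ) * (c + δ)) : ℝ) : ℂ) by rw [← Complex.ofReal_pow, hsq]]
      push_cast
      field_simp
    have hcp : (J.map Complex.ofReal).charpoly = (X - C r) * (X - C (-r)) := by
      have hkey : (C ((-(c * δ / (c - δ)) : ℝ) : ℂ)) * (C ((β * c / (c + δ) : ℝ) : ℂ))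
          = C r ^ 2 := by
        rw [← map_mul, ← map_pow]
        congr 1
        rw [hr2]
        push_cast
        field_simp
      rw [hmap, Matrix.charpoly, Matrix.det_fin_two]
      simp only [Matrix.charmatrix_apply_eq, Matrix.charmatrix_apply_ne _ _ _ (by decide : (0 : Fin 2) ≠ 1),
        Matrix.charmatrix_apply_ne _ _ _ (by decide : (1 : Fin 2) ≠ 0),
        map_neg, map_zero]
      simp only [Matrix.cons_val', Matrix.cons_val_zero, Matrix.cons_val_one, Matrix.head_cons,
        Matrix.empty_val', Matrix.cons_val_fin_one, Matrix.head_fin_const, map_neg, map_zero,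
        Matrix.of_apply]
      rw [show (X - (0:ℂ[X])) * (X - 0) - - C ((-(c * δ / (c - δ)) : ℝ) : ℂ) * - C ((β * c / (c + δ) : ℝ) : ℂ)
          = X * X - (C ((-(c * δ / (c - δ)) : ℝ) : ℂ) * C ((β * c / (c + δ) : ℝ) : ℂ)) by ring, hkey]
      ring
    rw [hcp, Polynomial.roots_mul (mul_ne_zero (Polynomial.X_sub_C_ne_zero r)
      (Polynomial.X_sub_C_ne_zero (-r))), Polynomial.roots_X_sub_C, Polynomial.roots_X_sub_C]
    rfl
end
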